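/- arXiv:0901.2317 — 2 statements merged into one kernel-verified Lean document; each statement's English description precedes it below -/
import Mathlib

section
/- Let ∂ be a ℤ-linear map from chains on S to chains on T. Every chain A : S →₀ ℤ can be written as a finite sum A = B₁ + ⋯ + Bₙ in which each Bᵢ is a nonzero connected component of A, and moreover ‖A‖ = ‖B₁‖ + ⋯ + ‖Bₙ‖ and ‖∂A‖ = ‖∂B₁‖ + ⋯ + ‖∂Bₙ‖. Consequently, if ∂A = 0 then ∂Bᵢ = 0 for every i. -/
/-- The volume of a chain `A : S →₀ ℤ`: the sum of the absolute values of its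
coefficients. -/
def vol {S : Type*} (A : S →₀ ℤ) : ℕ := ∑ s ∈ A.support, (A s).natAbs

/-- `B` is a subchain of `A` when `‖A‖ = ‖B‖ + ‖A - B‖`. -/
def Subchain {S : Type*} (B A : S →₀ ℤ) : Prop := vol A = vol B + vol (A - B)

/-- Given a boundary map `d`, `B` is a component of `A` if `B` is a subchain of `A`
and `d B` is a subchain of `d A`. -/
def Component {S T : Type*} (d : (S →₀ ℤ) →ₗ[ℤ] (T →₀ ℤ)) (B A : S →₀ ℤ) : Prop :=
  Subchain B A ∧ Subchain (d B) (d A)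

/-- A chain is connected if its only components are `0` and itself. -/
def Connected {S T : Type*} (d : (S →₀ ℤ) →ₗ[ℤ] (T →₀ ℤ)) (A : S →₀ ℤ) : Prop :=
  ∀ B : S →₀ ℤ, Component d B A → B = 0 ∨ B = A

lemma vol_eq_sum {S : Type*} (A : S →₀ ℤ) (t : Finset S) (h : A.support ⊆ t) :
    vol A = ∑ s ∈ t, (A s).natAbs := by
  unfold vol
  refine Finset.sum_subset h (fun s _ hs => ?_)
  simp [Finsupp.notMem_support_iff.mp hs]

lemma vol_zero {S : Type*} : vol (0 : S →₀ ℤ) = 0 := by simp [vol]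

lemma vol_eq_zero {S : Type*} {A : S →₀ ℤ} : vol A = 0 ↔ A = 0 := by
  constructor
  · intro h
    rw [← Finsupp.support_eq_empty]
    by_contra hs
    obtain ⟨s, hsm⟩ := Finset.nonempty_iff_ne_empty.mpr hs
    have hA : A s ≠ 0 := Finsupp.mem_support_iff.mp hsm
    have := Finset.sum_eq_zero_iff.mp h s hsm
    omega
  · rintro rfl; exact vol_zero

lemma subchain_iff {S : Type*} {B A : S →₀ ℤ} :
    Subchain B A ↔ ∀ s, (A s).natAbs = (B s).natAbs + (A s - B s).natAbs := by
  classical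
  set t := A.support ∪ B.support ∪ (A - B).support with ht
  have hsubA : A.support ⊆ t := Finset.subset_union_left.trans Finset.subset_union_left
  have hsubB : B.support ⊆ t := Finset.subset_union_right.trans Finset.subset_union_left
  have hsubAB : (A - B).support ⊆ t := Finset.subset_union_right
  have hA := vol_eq_sum A t hsubA
  have hB := vol_eq_sum B t hsubB
  have hAB := vol_eq_sum (A - B) t hsubAB
  have hsub : ∀ s, (A - B) s = A s - B s := fun s => Finsupp.sub_apply _ _ _
  constructor
  · intro h s
    have hle : ∀ x ∈ t, (A x).natAbs ≤ (B x).natAbs + (A x - B x).natAbs := by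
      intro x _; omega
    have hsum : ∑ x ∈ t, (A x).natAbs
        = ∑ x ∈ t, ((B x).natAbs + (A x - B x).natAbs) := by
      have key : ∑ x ∈ t, ((B x).natAbs + (A x - B x).natAbs)
          = vol B + vol (A - B) := by
        rw [hB, hAB, ← Finset.sum_add_distrib]
        exact Finset.sum_congr rfl (fun x _ => by rw [hsub x])
      rw [key, ← hA]
      exact h
    by_cases hst : s ∈ t
    · exact (Finset.sum_eq_sum_iff_of_le hle).mp hsum s hst
    · have h1 : A s = 0 := by
        by_contra h'; exact hst (hsubA (Finsupp.mem_support_iff.mpr h'))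
      have h2 : B s = 0 := by
        by_contra h'; exact hst (hsubB (Finsupp.mem_support_iff.mpr h'))
      rw [h1, h2]; simp
  · intro h
    unfold Subchain
    rw [hA, hB, hAB, ← Finset.sum_add_distrib]
    refine Finset.sum_congr rfl (fun x _ => ?_)
    rw [hsub x]; exact h x

lemma subchain_self {S : Type*} (A : S →₀ ℤ) : Subchain A A := by
  rw [subchain_iff]; intro s; omega

lemma subchain_trans {S : Type*} {C B A : S →₀ ℤ}
    (h1 : Subchain C B) (h2 : Subchain B A) : Subchain C A := by
  rw [subchain_iff] at h1 h2 ⊢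
  intro s
  have := h1 s; have := h2 s; omega

lemma subchain_zero_right {S : Type*} {B : S →₀ ℤ} (h : Subchain B 0) : B = 0 := by
  rw [subchain_iff] at h
  ext s
  have := h s
  simp only [Finsupp.coe_zero, Pi.zero_apply] at this ⊢
  omega

lemma subchain_compl {S : Type*} {B A : S →₀ ℤ} (h : Subchain B A) :
    Subchain (A - B) A := by
  rw [subchain_iff] at h ⊢
  intro s
  have := h s
  rw [Finsupp.sub_apply]
  omega

lemma component_self {S T : Type*} (d : (S →₀ ℤ) →ₗ[ℤ] (T →₀ ℤ)) (A : S →₀ ℤ) :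
    Component d A A := ⟨subchain_self A, subchain_self (d A)⟩

lemma component_compl {S T : Type*} {d : (S →₀ ℤ) →ₗ[ℤ] (T →₀ ℤ)} {B A : S →₀ ℤ}
    (h : Component d B A) : Component d (A - B) A := by
  refine ⟨subchain_compl h.1, ?_⟩
  rw [map_sub]
  exact subchain_compl h.2

lemma component_trans {S T : Type*} {d : (S →₀ ℤ) →ₗ[ℤ] (T →₀ ℤ)} {C B A : S →₀ ℤ}
    (h1 : Component d C B) (h2 : Component d B A) : Component d C A :=
  ⟨subchain_trans h1.1 h2.1, subchain_trans h1.2 h2.2⟩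

lemma decomposition_aux {S T : Type*} (d : (S →₀ ℤ) →ₗ[ℤ] (T →₀ ℤ)) :
    ∀ n : ℕ, ∀ A : S →₀ ℤ, vol A ≤ n →
    ∃ (k : ℕ) (B : Fin k → (S →₀ ℤ)),
      A = ∑ i, B i ∧
      (∀ i, B i ≠ 0) ∧
      (∀ i, Connected d (B i)) ∧
      (∀ i, Component d (B i) A) ∧
      vol A = ∑ i, vol (B i) ∧
      vol (d A) = ∑ i, vol (d (B i)) := by
  intro n
  induction n with
  | zero =>
    intro A hA
    have hA0 : A = 0 := vol_eq_zero.mp (Nat.le_zero.mp hA)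
    subst hA0
    exact ⟨0, fun i => i.elim0, by simp, fun i => i.elim0, fun i => i.elim0,
      fun i => i.elim0, by simp [vol_zero], by simp [vol_zero]⟩
  | succ n ih =>
    intro A hA
    by_cases h0 : A = 0
    · subst h0
      exact ⟨0, fun i => i.elim0, by simp, fun i => i.elim0, fun i => i.elim0,
        fun i => i.elim0, by simp [vol_zero], by simp [vol_zero]⟩
    by_cases hc : Connected d A
    · refine ⟨1, fun _ => A, by simp, fun _ => h0, fun _ => hc,
        fun _ => component_self d A, by simp, by simp⟩
    · rw [Connected] at hc
      push_neg at hc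
      obtain ⟨B, hB, hB0, hBA⟩ := hc
      have hvol : vol A = vol B + vol (A - B) := hB.1
      have hvold : vol (d A) = vol (d B) + vol (d A - d B) := hB.2
      have hC0 : A - B ≠ 0 := sub_ne_zero_of_ne (Ne.symm hBA)
      have hB1 : 1 ≤ vol B := by
        rcases Nat.eq_zero_or_pos (vol B) with h | h
        · exact absurd (vol_eq_zero.mp h) hB0
        · exact h
      have hC1 : 1 ≤ vol (A - B) := by
        rcases Nat.eq_zero_or_pos (vol (A - B)) with h | h
        · exact absurd (vol_eq_zero.mp h) hC0
        · exact h
      obtain ⟨k₁, B₁, hsum₁, hne₁, hconn₁, hcomp₁, hv₁, hvd₁⟩ :=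
        ih B (by omega)
      obtain ⟨k₂, B₂, hsum₂, hne₂, hconn₂, hcomp₂, hv₂, hvd₂⟩ :=
        ih (A - B) (by omega)
      have hCcomp : Component d (A - B) A := component_compl hB
      refine ⟨k₁ + k₂, Fin.append B₁ B₂, ?_, ?_, ?_, ?_, ?_, ?_⟩
      · rw [Fin.sum_univ_add]
        simp only [Fin.append_left, Fin.append_right]
        rw [← hsum₁, ← hsum₂]
        abel
      · intro i
        refine Fin.addCases (fun j => ?_) (fun j => ?_) i
        · rw [Fin.append_left]; exact hne₁ j
        · rw [Fin.append_right]; exact hne₂ j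
      · intro i
        refine Fin.addCases (fun j => ?_) (fun j => ?_) i
        · rw [Fin.append_left]; exact hconn₁ j
        · rw [Fin.append_right]; exact hconn₂ j
      · intro i
        refine Fin.addCases (fun j => ?_) (fun j => ?_) i
        · rw [Fin.append_left]; exact component_trans (hcomp₁ j) hB
        · rw [Fin.append_right]; exact component_trans (hcomp₂ j) hCcomp
      · rw [Fin.sum_univ_add]
        simp only [Fin.append_left, Fin.append_right]
        omega
      · rw [Fin.sum_univ_add]
        simp only [Fin.append_left, Fin.append_right]
        rw [map_sub] at hvd₂
        omega

/-- Every chain decomposes as a finite sum of nonzero connected components, with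
additivity of volumes and boundary volumes; in particular if `d A = 0` then each
component is a cycle. -/
theorem exists_connected_component_decomposition {S T : Type*}
    (d : (S →₀ ℤ) →ₗ[ℤ] (T →₀ ℤ)) (A : S →₀ ℤ) :
    ∃ (n : ℕ) (B : Fin n → (S →₀ ℤ)),
      A = ∑ i, B i ∧
      (∀ i, B i ≠ 0) ∧
      (∀ i, Connected d (B i)) ∧
      (∀ i, Component d (B i) A) ∧
      vol A = ∑ i, vol (B i) ∧
      vol (d A) = ∑ i, vol (d (B i)) ∧
      (d A = 0 → ∀ i, d (B i) = 0) := by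
  obtain ⟨n, B, h1, h2, h3, h4, h5, h6⟩ := decomposition_aux d (vol A) A le_rfl
  refine ⟨n, B, h1, h2, h3, h4, h5, h6, ?_⟩
  intro hdA i
  have := (h4 i).2
  rw [hdA] at this
  exact subchain_zero_right this
end

section
/- Let a group G act on S and on T, and let ∂ be a G-equivariant ℤ-linear map from chains on S to chains on T. Assume the action of G on S has finitely many orbits, and that for every t ∈ T the set { s ∈ S : t lies in the support of ∂δ_s } is finite. Then for every n ∈ ℕ there is a finite set 𝒜 of connected chains such that every connected chain A with ‖A‖ ≤ n equals g • A₀ for some g ∈ G and A₀ ∈ 𝒜; that is, up to the G-action there are only finitely many connected chains of volume at most n. -/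
/-- The action of a group element on chains induced by relabeling indices. -/
noncomputable def chainSMul {G S : Type*} [SMul G S] (g : G) (A : S →₀ ℤ) : S →₀ ℤ :=
  Finsupp.mapDomain (fun s => g • s) A

section aux
variable {S T : Type*}

lemma vol_eq_sum_subset (A : S →₀ ℤ) {F : Finset S} (h : A.support ⊆ F) :
    vol A = ∑ s ∈ F, (A s).natAbs := by
  rw [vol, Finset.sum_subset h]
  intro x _ hx
  simp [Finsupp.notMem_support_iff.mp hx]

lemma natAbs_le_vol (A : S →₀ ℤ) (s : S) : (A s).natAbs ≤ vol A := by
  by_cases hs : s ∈ A.support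
  · rw [vol]; exact Finset.single_le_sum (f := fun s => (A s).natAbs) (fun i _ => Nat.zero_le _) hs
  · simp [Finsupp.notMem_support_iff.mp hs]

lemma card_support_le_vol (A : S →₀ ℤ) : A.support.card ≤ vol A := by
  rw [vol, Finset.card_eq_sum_ones]
  exact Finset.sum_le_sum fun s hs => by
    have := Finsupp.mem_support_iff.mp hs
    exact Int.natAbs_pos.mpr this
  

lemma vol_add_of_disjoint {B C : S →₀ ℤ} (h : Disjoint B.support C.support) :
    vol (B + C) = vol B + vol C := by
  classical
  have hsub : (B + C).support ⊆ B.support ∪ C.support := Finsupp.support_add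
  rw [vol_eq_sum_subset _ hsub, Finset.sum_union h]
  have h1 : ∑ s ∈ B.support, ((B + C) s).natAbs = vol B := by
    rw [vol]
    refine Finset.sum_congr rfl fun s hs => ?_
    have hc : C s = 0 := Finsupp.notMem_support_iff.mp (Finset.disjoint_left.mp h hs)
    simp [hc]
  have h2 : ∑ s ∈ C.support, ((B + C) s).natAbs = vol C := by
    rw [vol]
    refine Finset.sum_congr rfl fun s hs => ?_
    have hb : B s = 0 := Finsupp.notMem_support_iff.mp (Finset.disjoint_right.mp h hs)
    simp [hb]
  rw [h1, h2]

lemma subchain_add_of_disjoint {B C : S →₀ ℤ} (h : Disjoint B.support C.support) :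
    Subchain B (B + C) := by
  unfold Subchain
  rw [add_sub_cancel_left, vol_add_of_disjoint h]


lemma support_d_subset (d : (S →₀ ℤ) →ₗ[ℤ] (T →₀ ℤ)) (B : S →₀ ℤ) [DecidableEq T] :
    (d B).support ⊆ B.support.biUnion (fun s => (d (Finsupp.single s 1)).support) := by
  classical
  have hB : d B = B.sum fun s z => d (Finsupp.single s z) := by
    conv_lhs => rw [← Finsupp.sum_single B]
    exact map_finsuppSum d _ _
  rw [hB]
  refine Finsupp.support_sum.trans ?_
  refine Finset.biUnion_subset.mpr fun s hs => ?_
  refine subset_trans ?_ (Finset.subset_biUnion_of_mem _ hs)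
  have : Finsupp.single s (B s) = (B s) • Finsupp.single s (1:ℤ) := by
    simp [Finsupp.smul_single]
  rw [this, map_smul]
  exact Finsupp.support_smul


lemma support_subset_of_closed (d : (S →₀ ℤ) →ₗ[ℤ] (T →₀ ℤ)) {A : S →₀ ℤ}
    (hA : Connected d A) (U : Set S)
    (hcl : ∀ s ∈ U, ∀ s' : S, s' ∈ A.support → s' ∉ U →
      Disjoint (d (Finsupp.single s 1)).support (d (Finsupp.single s' 1)).support)
    (hne : ∃ s ∈ A.support, s ∈ U) :
    ↑A.support ⊆ U := by
  classical
  set B := A.filter (fun s => s ∈ U) with hBdef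
  set C := A.filter (fun s => s ∉ U) with hCdef
  have hBC : B + C = A := Finsupp.filter_pos_add_filter_neg A _
  have hsB : B.support = A.support.filter (fun s => s ∈ U) := by
    simp [hBdef, Finsupp.support_filter]
  have hsC : C.support = A.support.filter (fun s => s ∉ U) := by
    simp [hCdef, Finsupp.support_filter]
  have hdisj : Disjoint B.support C.support := by
    rw [Finset.disjoint_left]
    intro x hx1 hx2
    rw [hsB, Finset.mem_filter] at hx1
    rw [hsC, Finset.mem_filter] at hx2
    exact hx2.2 hx1.2
  have hdisj2 : Disjoint (d B).support (d C).support := by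
    refine Finset.disjoint_of_subset_left (support_d_subset d B)
      (Finset.disjoint_of_subset_right (support_d_subset d C) ?_)
    rw [Finset.disjoint_biUnion_left]
    intro s hs
    rw [Finset.disjoint_biUnion_right]
    intro s' hs'
    rw [hsB, Finset.mem_filter] at hs
    rw [hsC, Finset.mem_filter] at hs'
    exact hcl s hs.2 s' hs'.1 hs'.2
  have hcomp : Component d B A := by
    constructor
    · rw [← hBC]; exact subchain_add_of_disjoint hdisj
    · have : d A = d B + d C := by rw [← hBC, map_add]
      rw [this]; exact subchain_add_of_disjoint hdisj2
  rcases hA B hcomp with h0 | hAB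
  · exfalso
    obtain ⟨s, hsA, hsU⟩ := hne
    have : B s = A s := Finsupp.filter_apply_pos _ _ hsU
    rw [h0] at this
    exact Finsupp.mem_support_iff.mp hsA this.symm
  · intro s hs
    by_contra hsU
    have : B s = 0 := Finsupp.filter_apply_neg _ _ hsU
    rw [hAB] at this
    exact Finsupp.mem_support_iff.mp hs this


variable {G : Type*} [Group G] [MulAction G S] [MulAction G T]

lemma chainSMul_chainSMul (g h : G) (A : S →₀ ℤ) :
    chainSMul g (chainSMul h A) = chainSMul (g * h) A := by
  unfold chainSMul
  rw [← Finsupp.mapDomain_comp]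
  congr 1
  funext s
  simp [mul_smul]

lemma chainSMul_one (A : S →₀ ℤ) : chainSMul (1 : G) A = A := by
  unfold chainSMul
  have : (fun s : S => (1:G) • s) = id := by funext s; simp
  rw [this, Finsupp.mapDomain_id]

lemma chainSMul_inv_chainSMul (g : G) (A : S →₀ ℤ) :
    chainSMul g (chainSMul g⁻¹ A) = A := by
  rw [chainSMul_chainSMul, mul_inv_cancel, chainSMul_one]

lemma chainSMul_apply (g : G) (A : S →₀ ℤ) (s : S) :
    chainSMul g A (g • s) = A s :=
  Finsupp.mapDomain_apply (MulAction.injective g) A s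

lemma chainSMul_support (g : G) (A : S →₀ ℤ) [DecidableEq S] :
    (chainSMul g A).support = A.support.image (fun s => g • s) :=
  Finsupp.mapDomain_support_of_injective (MulAction.injective g) A

lemma vol_chainSMul (g : G) (A : S →₀ ℤ) : vol (chainSMul g A) = vol A := by
  classical
  rw [vol, vol, chainSMul_support]
  rw [Finset.sum_image (fun a _ b _ h => MulAction.injective g h)]
  exact Finset.sum_congr rfl fun s _ => by rw [chainSMul_apply]

lemma chainSMul_add (g : G) (A B : S →₀ ℤ) :
    chainSMul g (A + B) = chainSMul g A + chainSMul g B :=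
  Finsupp.mapDomain_add

lemma chainSMul_sub (g : G) (A B : S →₀ ℤ) :
    chainSMul g (A - B) = chainSMul g A - chainSMul g B := by
  rw [eq_sub_iff_add_eq, ← chainSMul_add, sub_add_cancel]

lemma chainSMul_zero (g : G) : chainSMul g (0 : S →₀ ℤ) = 0 :=
  Finsupp.mapDomain_zero

lemma subchain_chainSMul_iff (g : G) (B A : S →₀ ℤ) :
    Subchain (chainSMul g B) (chainSMul g A) ↔ Subchain B A := by
  unfold Subchain
  rw [← chainSMul_sub, vol_chainSMul, vol_chainSMul, vol_chainSMul]

lemma connected_chainSMul (d : (S →₀ ℤ) →ₗ[ℤ] (T →₀ ℤ))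
    (hequiv : ∀ (g : G) (A : S →₀ ℤ), d (chainSMul g A) = chainSMul g (d A))
    (g : G) {A : S →₀ ℤ} (hA : Connected d A) : Connected d (chainSMul g A) := by
  intro B hB
  obtain ⟨h1, h2⟩ := hB
  set B' := chainSMul g⁻¹ B with hB'
  have hgB : chainSMul g B' = B := chainSMul_inv_chainSMul g B
  have hc : Component d B' A := by
    constructor
    · rw [← subchain_chainSMul_iff g, hgB]; exact h1
    · rw [← subchain_chainSMul_iff (g := g), ← hequiv, ← hequiv, hgB]; exact h2
  rcases hA B' hc with h0 | hBA
  · left; rw [← hgB, h0, chainSMul_zero]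
  · right; rw [← hgB, hBA]


/-- One-step neighborhood in the adjacency graph induced by `d`. -/
def nbhd (d : (S →₀ ℤ) →ₗ[ℤ] (T →₀ ℤ)) (X : Set S) : Set S :=
  X ∪ {s' | ∃ s ∈ X, ¬ Disjoint (d (Finsupp.single s 1)).support (d (Finsupp.single s' 1)).support}

lemma subset_nbhd (d : (S →₀ ℤ) →ₗ[ℤ] (T →₀ ℤ)) (X : Set S) : X ⊆ nbhd d X :=
  Set.subset_union_left

lemma nbhd_mono (d : (S →₀ ℤ) →ₗ[ℤ] (T →₀ ℤ)) {X Y : Set S} (h : X ⊆ Y) :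
    nbhd d X ⊆ nbhd d Y := by
  apply Set.union_subset_union h
  rintro s' ⟨s, hs, hd⟩
  exact ⟨s, h hs, hd⟩

lemma nbhd_finite (d : (S →₀ ℤ) →ₗ[ℤ] (T →₀ ℤ))
    (hloc : ∀ t : T, {s : S | t ∈ (d (Finsupp.single s 1)).support}.Finite)
    {X : Set S} (hX : X.Finite) : (nbhd d X).Finite := by
  refine hX.union ?_
  have hsub : {s' | ∃ s ∈ X, ¬ Disjoint (d (Finsupp.single s 1)).support
      (d (Finsupp.single s' 1)).support} ⊆
      ⋃ s ∈ X, ⋃ t ∈ (d (Finsupp.single s 1)).support,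
        {s' : S | t ∈ (d (Finsupp.single s' 1)).support} := by
    rintro s' ⟨s, hs, hd⟩
    rw [Finset.not_disjoint_iff] at hd
    obtain ⟨t, ht1, ht2⟩ := hd
    exact Set.mem_biUnion hs (Set.mem_biUnion ht1 ht2)
  refine Set.Finite.subset ?_ hsub
  exact hX.biUnion fun s _ => (d (Finsupp.single s 1)).support.finite_toSet.biUnion
    fun t _ => hloc t

lemma ball_finite (d : (S →₀ ℤ) →ₗ[ℤ] (T →₀ ℤ))
    (hloc : ∀ t : T, {s : S | t ∈ (d (Finsupp.single s 1)).support}.Finite)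
    {X : Set S} (hX : X.Finite) (k : ℕ) : ((nbhd d)^[k] X).Finite := by
  induction k with
  | zero => exact hX
  | succ k ih => rw [Function.iterate_succ_apply']; exact nbhd_finite d hloc ih

lemma ball_mono_start (d : (S →₀ ℤ) →ₗ[ℤ] (T →₀ ℤ)) {X Y : Set S} (h : X ⊆ Y) (k : ℕ) :
    (nbhd d)^[k] X ⊆ (nbhd d)^[k] Y := by
  induction k with
  | zero => exact h
  | succ k ih =>
    rw [Function.iterate_succ_apply', Function.iterate_succ_apply']
    exact nbhd_mono d ih


lemma support_subset_iter (d : (S →₀ ℤ) →ₗ[ℤ] (T →₀ ℤ))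
    {A : S →₀ ℤ} (hA : Connected d A) {σ : S} (hσA : σ ∈ A.support)
    {n : ℕ} (hvol : vol A ≤ n) (X : Set S) (hσX : σ ∈ X) :
    ↑A.support ⊆ (nbhd d)^[n] X := by
  classical
  obtain ⟨R, hR0, hRs⟩ : ∃ R : ℕ → Finset S, R 0 = {σ} ∧ ∀ k, R (k+1) = R k ∪
      A.support.filter (fun s' => ∃ s ∈ R k,
        ¬ Disjoint (d (Finsupp.single s 1)).support (d (Finsupp.single s' 1)).support) :=
    ⟨fun k => Nat.rec {σ} (fun _ Rk => Rk ∪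
      A.support.filter (fun s' => ∃ s ∈ Rk,
        ¬ Disjoint (d (Finsupp.single s 1)).support (d (Finsupp.single s' 1)).support)) k,
      rfl, fun k => rfl⟩
  -- basic properties
  have hsubA : ∀ k, R k ⊆ A.support := by
    intro k
    induction k with
    | zero => rw [hR0]; simpa using hσA
    | succ k ih =>
      rw [hRs]
      exact Finset.union_subset ih (Finset.filter_subset _ _)
  have hmono : ∀ k, R k ⊆ R (k+1) := fun k => by rw [hRs]; exact Finset.subset_union_left
  have hstab : ∀ k, R (k+1) = R k → R (k+1+1) = R (k+1) := by
    intro k h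
    rw [hRs (k+1), h, ← hRs k, h]
  have hcard : ∀ k, R (k+1) = R k ∨ k + 1 < (R (k+1)).card := by
    intro k
    induction k with
    | zero =>
      by_cases h : R 1 = R 0
      · exact Or.inl h
      · right
        have h1 : R 0 ⊂ R 1 := Finset.ssubset_iff_subset_ne.mpr ⟨hmono 0, Ne.symm h⟩
        have h2 : (R 0).card < (R 1).card := Finset.card_lt_card h1
        rw [hR0] at h2
        simpa using h2
    | succ k ih =>
      by_cases h : R (k+1+1) = R (k+1)
      · exact Or.inl h
      · right
        have hne : R (k+1) ≠ R k := fun he => h (hstab k he)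
        have h1 : k + 1 < (R (k+1)).card := ih.resolve_left hne
        have h2 : (R (k+1)).card < (R (k+1+1)).card :=
          Finset.card_lt_card (Finset.ssubset_iff_subset_ne.mpr ⟨hmono (k+1), Ne.symm h⟩)
        omega
  have hfix : R (n+1) = R n := by
    rcases hcard n with h | h
    · exact h
    · exfalso
      have := Finset.card_le_card (hsubA (n+1))
      have := card_support_le_vol A
      omega
  -- support of A is contained in R n
  have hσR : ∀ k, σ ∈ R k := by
    intro k
    induction k with
    | zero => rw [hR0]; exact Finset.mem_singleton_self σ
    | succ m ih => exact hmono m ih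
  have hcl : ↑A.support ⊆ (↑(R n) : Set S) := by
    refine support_subset_of_closed d hA _ ?_ ⟨σ, hσA, by exact_mod_cast hσR n⟩
    intro s hs s' hs'A hs'U
    by_contra hd
    apply hs'U
    have : s' ∈ R (n+1) := by
      rw [hRs]
      exact Finset.mem_union_right _ (Finset.mem_filter.mpr ⟨hs'A, s, hs, hd⟩)
    rw [hfix] at this
    exact_mod_cast this
  -- R k is inside the k-th neighborhood
  have hball : ∀ k, ↑(R k) ⊆ (nbhd d)^[k] X := by
    intro k
    induction k with
    | zero =>
      rw [hR0]
      simpa using hσX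
    | succ k ih =>
      rw [Function.iterate_succ_apply', hRs]
      intro s' hs'
      rcases Finset.mem_union.mp hs' with h | h
      · exact subset_nbhd d _ (ih h)
      · obtain ⟨-, s, hs, hd⟩ := Finset.mem_filter.mp h
        exact Or.inr ⟨s, ih hs, hd⟩
  exact hcl.trans (hball n)


lemma chains_finite (K : Finset S) (n : ℕ) :
    {A : S →₀ ℤ | ↑A.support ⊆ (K : Set S) ∧ ∀ s, (A s).natAbs ≤ n}.Finite := by
  classical
  set P := {A : S →₀ ℤ | ↑A.support ⊆ (K : Set S) ∧ ∀ s, (A s).natAbs ≤ n}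
  have himg : (fun (A : S →₀ ℤ) (s : K) => A s) '' P ⊆
      Set.pi Set.univ (fun _ : K => ↑(Finset.Icc (-(n:ℤ)) n)) := by
    rintro f ⟨A, hA, rfl⟩ s _
    have := hA.2 s
    simp only [Finset.coe_Icc, Set.mem_Icc]
    omega
  have hfin : ((fun (A : S →₀ ℤ) (s : K) => A s) '' P).Finite :=
    Set.Finite.subset (Set.Finite.pi fun _ => (Finset.Icc _ _).finite_toSet) himg
  refine Set.Finite.of_finite_image hfin ?_
  intro A hA B hB hfAB
  ext s
  by_cases hs : s ∈ K
  · exact congrFun hfAB ⟨s, hs⟩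
  · have hAs : A s = 0 := by
      by_contra h
      exact hs (hA.1 (Finsupp.mem_support_iff.mpr h))
    have hBs : B s = 0 := by
      by_contra h
      exact hs (hB.1 (Finsupp.mem_support_iff.mpr h))
    rw [hAs, hBs]

end aux

/-- If a group `G` acts on `S` and `T` with `d` equivariant, the action on `S` has
finitely many orbits, and `d` is locally finite, then up to the `G`-action there are
only finitely many connected chains of volume at most `n`. -/
theorem finitely_many_connected_chains_up_to_action
    {G S T : Type*} [Group G] [MulAction G S] [MulAction G T]
    (d : (S →₀ ℤ) →ₗ[ℤ] (T →₀ ℤ))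
    (hequiv : ∀ (g : G) (A : S →₀ ℤ), d (chainSMul g A) = chainSMul g (d A))
    (horb : ∃ Sig : Finset S, ∀ s : S, ∃ g : G, ∃ σ ∈ Sig, s = g • σ)
    (hloc : ∀ t : T, {s : S | t ∈ (d (Finsupp.single s 1)).support}.Finite)
    (n : ℕ) :
    ∃ 𝒜 : Finset (S →₀ ℤ), ∀ A : S →₀ ℤ, Connected d A → vol A ≤ n →
      ∃ g : G, ∃ A₀ ∈ 𝒜, A = chainSMul g A₀ := by
  classical
  obtain ⟨Sig, hSig⟩ := horb
  have hKfin : ((nbhd d)^[n] ↑Sig).Finite := ball_finite d hloc Sig.finite_toSet n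
  set K := hKfin.toFinset with hK
  have hPfin := chains_finite K n
  refine ⟨hPfin.toFinset, ?_⟩
  intro A hA hvol
  by_cases h0 : A = 0
  · refine ⟨1, 0, ?_, ?_⟩
    · rw [Set.Finite.mem_toFinset]; exact ⟨by simp, fun s => by simp⟩
    · rw [h0, chainSMul_zero]
  · obtain ⟨s, hs⟩ := Finsupp.support_nonempty_iff.mpr h0
    obtain ⟨g, σ, hσSig, hsgσ⟩ := hSig s
    refine ⟨g, chainSMul g⁻¹ A, ?_, (chainSMul_inv_chainSMul g A).symm⟩
    rw [Set.Finite.mem_toFinset]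
    have hA' : Connected d (chainSMul g⁻¹ A) := connected_chainSMul d hequiv g⁻¹ hA
    have hvol' : vol (chainSMul g⁻¹ A) = vol A := vol_chainSMul g⁻¹ A
    have hinv : g⁻¹ • s = σ := by rw [hsgσ, inv_smul_smul]
    have hσ : σ ∈ (chainSMul g⁻¹ A).support := by
      rw [Finsupp.mem_support_iff, ← hinv, chainSMul_apply]
      exact Finsupp.mem_support_iff.mp hs
    have hvn : vol (chainSMul g⁻¹ A) ≤ n := by rw [hvol']; exact hvol
    refine ⟨?_, fun s' => le_trans (natAbs_le_vol _ s') hvn⟩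
    have hsupp := support_subset_iter d hA' hσ hvn ↑Sig hσSig
    rwa [hK, Set.Finite.coe_toFinset]
end
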